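/- The energy of a finite simple graph is never an odd integer. -/

import Mathlib

open Finset

noncomputable def graphEnergy {V : Type*} [Fintype V] [DecidableEq V] (G : SimpleGraph V) : ℝ :=
  have : DecidableRel G.Adj := Classical.decRel _
  ∑ i, |(show (G.adjMatrix ℝ).IsHermitian by
      rw [Matrix.IsHermitian, Matrix.conjTranspose_eq_transpose_of_trivial]
      exact G.isSymm_adjMatrix).eigenvalues i|

open Polynomial Matrix in
/-- Every eigenvalue of a real Hermitian matrix is a root of its characteristic polynomial. -/
lemma GraphEnergyAux.eig_root {n : Type*} [Fintype n] [DecidableEq n] (A : Matrix n n ℝ)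
    (hA : A.IsHermitian) (i : n) : (A.charpoly).eval (hA.eigenvalues i) = 0 := by
  have hμ := hA.eigenvalues_mem_spectrum_real i
  rw [spectrum.mem_iff] at hμ
  rw [Matrix.charpoly, _root_.eval_det, Matrix.matPolyEquiv_charmatrix]
  rw [Matrix.isUnit_iff_isUnit_det] at hμ
  simp only [eval_sub, eval_X, eval_C] at *
  by_contra h
  exact hμ (isUnit_iff_ne_zero.mpr h)

open Polynomial Matrix in
/-- Eigenvalues of the adjacency matrix are algebraic integers. -/
lemma GraphEnergyAux.eig_integral {V : Type*} [Fintype V] [DecidableEq V] (G : SimpleGraph V)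
    [DecidableRel G.Adj] (hA : (G.adjMatrix ℝ).IsHermitian) (i : V) :
    IsIntegral ℤ (hA.eigenvalues i) := by
  refine ⟨(G.adjMatrix ℤ).charpoly, (G.adjMatrix ℤ).charpoly_monic, ?_⟩
  have hmap : (G.adjMatrix ℤ).map (Int.cast : ℤ → ℝ) = G.adjMatrix ℝ := by
    ext a b; simp [Matrix.map_apply, SimpleGraph.adjMatrix]
  have : ((G.adjMatrix ℤ).map (Int.castRingHom ℝ)).charpoly
      = (G.adjMatrix ℤ).charpoly.map (Int.castRingHom ℝ) :=
    Matrix.charpoly_map _ _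
  show eval₂ (Int.castRingHom ℝ) (hA.eigenvalues i) (G.adjMatrix ℤ).charpoly = 0
  rw [eval₂_eq_eval_map, ← this,
    show (G.adjMatrix ℤ).map (Int.castRingHom ℝ) = G.adjMatrix ℝ from hmap]
  exact GraphEnergyAux.eig_root _ hA i

open Matrix in
/-- The trace of a real Hermitian matrix is the sum of its eigenvalues. -/
lemma GraphEnergyAux.trace_eq_sum_eig {n : Type*} [Fintype n] [DecidableEq n] (A : Matrix n n ℝ)
    (hA : A.IsHermitian) : A.trace = ∑ i, hA.eigenvalues i := by
  nth_rewrite 1 [hA.spectral_theorem]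
  rw [Unitary.conjStarAlgAut_apply]
  rw [Matrix.trace_mul_cycle]
  rw [show (star (hA.eigenvectorUnitary : Matrix n n ℝ)) * (hA.eigenvectorUnitary : Matrix n n ℝ)
      = 1 from (Matrix.mem_unitaryGroup_iff').mp (hA.eigenvectorUnitary).2]
  rw [one_mul, Matrix.trace_diagonal]
  simp

open Matrix in
lemma GraphEnergyAux.key {V : Type*} [Fintype V] [DecidableEq V] (G : SimpleGraph V)
    [DecidableRel G.Adj] (hA : (G.adjMatrix ℝ).IsHermitian) (m : ℤ) (hm : Odd m) :
    ∑ i, |hA.eigenvalues i| ≠ (m : ℝ) := by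
  intro hE
  set ev := hA.eigenvalues with hev
  set S := Finset.univ.filter (fun i => ev i < 0) with hS
  -- sum of eigenvalues is zero
  have h0 : ∑ i, ev i = 0 := by
    rw [← GraphEnergyAux.trace_eq_sum_eig _ hA, SimpleGraph.trace_adjMatrix]
  -- split the sum of absolute values
  have hsplit : ∑ i, |ev i| = ∑ i, ev i - 2 * ∑ i ∈ S, ev i := by
    have h1 : ∀ i, |ev i| = ev i - (if ev i < 0 then 2 * ev i else 0) := by
      intro i
      by_cases h : ev i < 0
      · rw [abs_of_neg h]; simp [h]; ring
      · rw [abs_of_nonneg (not_lt.mp h)]; simp [h]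
    rw [Finset.sum_congr rfl fun i _ => h1 i, Finset.sum_sub_distrib,
      ← Finset.sum_filter, ← hS, Finset.mul_sum]
  set x : ℝ := ∑ i ∈ S, ev i with hx
  have h2x : 2 * x = -(m : ℝ) := by
    rw [hsplit, h0] at hE
    linarith
  have hxint : IsIntegral ℤ x :=
    IsIntegral.sum _ fun i _ => GraphEnergyAux.eig_integral G hA i
  have hq : IsIntegral ℤ ((-(m : ℚ)) / 2) := by
    rw [← isIntegral_algebraMap_iff (algebraMap ℚ ℝ).injective]
    have : algebraMap ℚ ℝ ((-(m : ℚ)) / 2) = x := by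
      rw [eq_ratCast]
      push_cast
      linarith
    rwa [this]
  obtain ⟨y, hy⟩ := IsIntegrallyClosed.isIntegral_iff.mp hq
  have hy2 : (y : ℚ) * 2 = -(m : ℚ) := by
    field_simp at hy
    rw [eq_intCast] at hy
    linarith
  have hy3 : y * 2 = -m := by exact_mod_cast hy2
  exact ((Int.not_odd_iff_even.mpr ⟨-y, by omega⟩)) hm

theorem energy_not_odd {V : Type*} [Fintype V] [DecidableEq V] (G : SimpleGraph V) :
    ∀ m : ℤ, Odd m → graphEnergy G ≠ (m : ℝ) := by
  intro m hm
  unfold graphEnergy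
  exact @GraphEnergyAux.key V _ _ G (Classical.decRel _) _ m hm
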